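/- Let A be a periodic abelian group with trivial 2-component and with no cocyclic p-components. Let ε₁, ε₂ be commuting extremal involutions belonging to the same p-component with A_{ε₂} ⊆ A_{ε₁}^⊥, and set C = A_{ε₁}^⊥ ∩ A_{ε₂}^⊥, so that A = A_{ε₁} ⊕ A_{ε₂} ⊕ C. Then an automorphism x ∈ Aut A lies in the center of the centralizer of {ε₁, ε₂} in Aut A if and only if x preserves each of A_{ε₁}, A_{ε₂} and C, and the restriction of x to C lies in the center of Aut C (while the restrictions of x to A_{ε₁} and to A_{ε₂} are arbitrary automorphisms of these summands). -/

import Mathlib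

/-- The `p`-component of an abelian group: the subgroup of elements of `p`-power order. -/
def pComponent (A : Type*) [AddCommGroup A] (p : ℕ) : AddSubgroup A where
  carrier := {a | ∃ n : ℕ, p ^ n • a = 0}
  zero_mem' := ⟨0, smul_zero _⟩
  add_mem' := by
    rintro a b ⟨n, hn⟩ ⟨m, hm⟩
    refine ⟨n + m, ?_⟩
    have ha : p ^ (n + m) • a = 0 := by
      rw [pow_add, mul_comm, mul_smul, hn, smul_zero]
    have hb : p ^ (n + m) • b = 0 := by
      rw [pow_add, mul_smul, hm, smul_zero]
    rw [smul_add, ha, hb, add_zero]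
  neg_mem' := by
    rintro a ⟨n, hn⟩
    exact ⟨n, by rw [smul_neg, hn, neg_zero]⟩


/-- A nontrivial abelian group is cocyclic if it has a nontrivial subgroup contained in
every nontrivial subgroup. -/
def IsCocyclic (G : Type*) [AddCommGroup G] : Prop :=
  ∃ H : AddSubgroup G, H ≠ ⊥ ∧ ∀ K : AddSubgroup G, K ≠ ⊥ → H ≤ K

/-- For an involution `ε`, the subgroup `A_ε^+ = {a | ε a = a}` of fixed points. -/
def posPart {A : Type*} [AddCommGroup A] (ε : AddAut A) : AddSubgroup A where
  carrier := {a | ε a = a}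
  zero_mem' := map_zero ε
  add_mem' := by
    intro a b ha hb
    simp only [Set.mem_setOf_eq] at *
    rw [map_add, ha, hb]
  neg_mem' := by
    intro a ha
    simp only [Set.mem_setOf_eq] at *
    rw [map_neg, ha]

/-- For an involution `ε`, the subgroup `A_ε^- = {a | ε a = -a}`. -/
def negPart {A : Type*} [AddCommGroup A] (ε : AddAut A) : AddSubgroup A where
  carrier := {a | ε a = -a}
  zero_mem' := by simp
  add_mem' := by
    intro a b ha hb
    simp only [Set.mem_setOf_eq] at *
    rw [map_add, ha, hb, neg_add]
  neg_mem' := by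
    intro a ha
    simp only [Set.mem_setOf_eq] at *
    rw [map_neg, ha]

/-- A subgroup is indecomposable if it is nonzero and is not the (internal) direct sum
of two nonzero subgroups. -/
def Indecomp {A : Type*} [AddCommGroup A] (B : AddSubgroup A) : Prop :=
  B ≠ ⊥ ∧ ¬ ∃ C D : AddSubgroup A, C ≠ ⊥ ∧ D ≠ ⊥ ∧ C ⊓ D = ⊥ ∧ C ⊔ D = B

/-- The multiplicative group structure on `AddAut A` (composition), as in the older Mathlib. -/
instance AddAut.group {A : Type*} [AddCommGroup A] : Group (AddAut A) where
  mul g h := AddEquiv.trans h g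
  one := AddEquiv.refl _
  inv := AddEquiv.symm
  mul_assoc _ _ _ := rfl
  one_mul _ := rfl
  mul_one _ := rfl
  inv_mul_cancel := AddEquiv.self_trans_symm

/-- `ExtremalWith ε B Bp` says that `ε` is an extremal involution whose indecomposable
summand `A_ε` is `B` and whose complementary summand `A_ε^⊥` is `Bp`: `ε² = 1`, `B` is
one of the two summands `A_ε^+`, `A_ε^-` (and `Bp` the other one), and `B` is
indecomposable. -/
def ExtremalWith {A : Type*} [AddCommGroup A] (ε : AddAut A) (B Bp : AddSubgroup A) :
    Prop :=
  ε * ε = 1 ∧ Indecomp B ∧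
    ((B = posPart ε ∧ Bp = negPart ε) ∨ (B = negPart ε ∧ Bp = posPart ε))

/-- An involution is extremal if one of its two summands is indecomposable. -/
def IsExtremal {A : Type*} [AddCommGroup A] (ε : AddAut A) : Prop :=
  ∃ B Bp : AddSubgroup A, ExtremalWith ε B Bp

/-- `x` maps the subgroup `S` onto itself (in both directions), so that `x` restricts to
an automorphism of `S`. -/
def Preserves {A : Type*} [AddCommGroup A] (x : AddAut A) (S : AddSubgroup A) : Prop :=
  (∀ a ∈ S, x a ∈ S) ∧ (∀ a ∈ S, x.symm a ∈ S)

/-- `x` preserves the subgroup `S` and its restriction to `S` lies in the center of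
`Aut S`, i.e. it commutes with every automorphism of `S`. -/
def CentralOn {A : Type*} [AddCommGroup A] (x : AddAut A) (S : AddSubgroup A) : Prop :=
  ∃ h : Preserves x S,
    ∀ (g : AddAut ↥S) (a : ↥S), x ↑(g a) = ↑(g ⟨x ↑a, h.1 ↑a a.2⟩)

/-- `μ` is a *quasi-transvection* on the commuting extremal involutions `(ε₁, ε₂)`,
where `D = A_{ε₁}^⊥ ⊓ A_{ε₂}^⊥` is the complement of `A_{ε₁} ⊕ A_{ε₂}`: the restriction
of `μ` to `D` is central in `Aut D`, `μ² ≠ 1`, `ε₁με₁μ = 1`, and `μ` commutes with all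
its conjugates `dμd⁻¹` for `d` in the center of the centralizer of `{ε₁, ε₂}`. -/
def QTransv {A : Type*} [AddCommGroup A] (ε₁ ε₂ : AddAut A) (D : AddSubgroup A)
    (μ : AddAut A) : Prop :=
  CentralOn μ D ∧ μ * μ ≠ 1 ∧ ε₁ * μ * ε₁ * μ = 1 ∧
    ∀ d : AddAut A,
      (d ∈ Subgroup.centralizer {ε₁, ε₂} ∧
        ∀ y ∈ Subgroup.centralizer {ε₁, ε₂}, d * y = y * d) →
      (d * μ * d⁻¹) * μ = μ * (d * μ * d⁻¹)

/-! ### Auxiliary lemmas -/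

section AuxProof
variable {A : Type*} [AddCommGroup A] {p : ℕ}


lemma exists_pval_nat (hp : 2 ≤ p) : ∀ m : ℕ, m ≠ 0 → ∃ j t : ℕ, m = p ^ j * t ∧ ¬ p ∣ t := by
  intro m
  induction m using Nat.strong_induction_on with
  | _ m IH =>
    intro hm
    by_cases hd : p ∣ m
    · obtain ⟨m', rfl⟩ := hd
      have hm' : m' ≠ 0 := by rintro rfl; simp at hm
      have hlt : m' < p * m' := by
        have h1 := Nat.pos_of_ne_zero hm'
        nlinarith
      obtain ⟨j, t, h1, h2⟩ := IH m' hlt hm'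
      exact ⟨j + 1, t, by rw [h1, pow_succ]; ring, h2⟩
    · exact ⟨0, m, by simp, hd⟩

lemma exists_pval_int (hp : 2 ≤ p) (s : ℤ) (hs : s ≠ 0) :
    ∃ (j : ℕ) (t : ℤ), s = (p : ℤ) ^ j * t ∧ ¬ (p : ℤ) ∣ t := by
  obtain ⟨j, t, h1, h2⟩ := exists_pval_nat hp s.natAbs (by simpa using hs)
  have h2' : ¬ (p:ℤ) ∣ (t:ℤ) := by rwa [Int.natCast_dvd_natCast]
  rcases Int.natAbs_eq s with h | h
  · exact ⟨j, t, by rw [h, h1]; push_cast; ring, h2'⟩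
  · refine ⟨j, -t, by rw [h, h1]; push_cast; ring, by simpa using h2'⟩

/-- invert t modulo p^k on an element killed by p^k -/
lemma exists_zsmul_inv (hp : p.Prime) {t : ℤ} (hnd : ¬ (p:ℤ) ∣ t) {k : ℕ} {a : A}
    (ha : (p ^ k : ℕ) • a = 0) : ∃ γ : ℤ, γ • (t • a) = a := by
  have hpp : Prime (p : ℤ) := Int.prime_iff_natAbs_prime.mpr (by simpa using hp)
  have hco : IsCoprime (t : ℤ) ((p:ℤ) ^ k) :=
    (((hpp.coprime_iff_not_dvd).mpr hnd).pow_left).symm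
  obtain ⟨α, β, hαβ⟩ := hco
  refine ⟨α, ?_⟩
  have hza : ((p:ℤ) ^ k) • a = 0 := by
    have h3 : (((p ^ k : ℕ) : ℤ)) • a = 0 := by rw [natCast_zsmul]; exact ha
    simpa using h3
  calc α • t • a = (α * t) • a := (mul_smul α t a).symm
  _ = (α * t) • a + (β * (p:ℤ)^k) • a := by rw [mul_smul β, hza, smul_zero, add_zero]
  _ = (α * t + β * (p:ℤ)^k) • a := (add_smul _ _ a).symm
  _ = a := by rw [hαβ, one_smul]


lemma cast1 : ∀ (m : ℕ) (a : A), ((p:ℤ)^m) • a = (p^m : ℕ) • a := fun m a => by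
  rw [show ((p:ℤ)^m) = ((p^m:ℕ):ℤ) by push_cast; ring, natCast_zsmul]

lemma cyclic_socle (hp : p.Prime) {w u z' : A} {n : ℕ}
    (hu : (p^n : ℕ) • w = u) (hu0 : u ≠ 0) (hw0 : (p^(n+1) : ℕ) • w = 0)
    (s : ℤ) (hz' : z' = s • w) (hpz' : p • z' = 0) (hz'0 : z' ≠ 0) :
    ∃ t : ℤ, z' = t • u ∧ ¬ (p:ℤ) ∣ t := by
  have hu' : ((p:ℤ)^n) • w = u := by rw [cast1]; exact hu
  have hw0' : ((p:ℤ)^(n+1)) • w = 0 := by rw [cast1]; exact hw0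
  have hpz'' : (p:ℤ) • z' = 0 := by rw [natCast_zsmul]; exact hpz'
  have hs0 : s ≠ 0 := by rintro rfl; rw [zero_smul] at hz'; exact hz'0 hz'
  obtain ⟨j, t, rfl, hnd⟩ := exists_pval_int hp.two_le s hs0
  rcases lt_trichotomy j n with hj | hj | hj
  · exfalso
    set a := ((p:ℤ)^(j+1)) • w with ha
    have h2 : t • a = 0 := by
      rw [ha, ← mul_smul, mul_comm, show (p:ℤ)^(j+1) * t = (p:ℤ) * ((p:ℤ)^j * t) by ring,
        mul_smul, ← hz', hpz'']
    have h3 : (p ^ (n+1) : ℕ) • a = 0 := by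
      rw [← cast1, ha, ← mul_smul, mul_comm, mul_smul, hw0', smul_zero]
    obtain ⟨γ, hγ⟩ := exists_zsmul_inv hp hnd h3
    rw [h2, smul_zero] at hγ
    apply hu0
    rw [← hu', show (p:ℤ)^n = (p:ℤ)^(n-(j+1)) * (p:ℤ)^(j+1) by rw [← pow_add]; congr 1; omega,
      mul_smul, ← ha, ← hγ, smul_zero]
  · subst hj
    refine ⟨t, ?_, hnd⟩
    rw [hz', mul_comm, mul_smul, hu']
  · exfalso
    apply hz'0
    have hpj : (p:ℤ)^j = (p:ℤ)^(j-(n+1)) * (p:ℤ)^(n+1) := by rw [← pow_add]; congr 1; omega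
    rw [hz', show (p:ℤ)^j * t = t * (p:ℤ)^(j-(n+1)) * (p:ℤ)^(n+1) by rw [hpj]; ring,
      mul_smul, mul_smul, hw0', smul_zero, smul_zero]

/-- Zorn: maximal subgroup C with C₀ ≤ C ≤ B and C ⊓ W = ⊥. -/
lemma exists_maximal_disjoint (B W C₀ : AddSubgroup A) (hC₀B : C₀ ≤ B) (hC₀W : C₀ ⊓ W = ⊥) :
    ∃ C : AddSubgroup A, C₀ ≤ C ∧ C ≤ B ∧ C ⊓ W = ⊥ ∧
      ∀ C' : AddSubgroup A, C ≤ C' → C' ≤ B → C' ⊓ W = ⊥ → C' = C := by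
  set s : Set (AddSubgroup A) := {C | C₀ ≤ C ∧ C ≤ B ∧ C ⊓ W = ⊥} with hs
  have hchain : ∀ c ⊆ s, IsChain (fun x1 x2 => x1 ≤ x2) c → ∀ y ∈ c, ∃ ub ∈ s, ∀ z ∈ c, z ≤ ub := by
    intro c hcs hch y hy
    refine ⟨sSup c, ⟨?_, ?_, ?_⟩, fun z hz => le_sSup hz⟩
    · exact le_trans (hcs hy).1 (le_sSup hy)
    · exact sSup_le (fun z hz => (hcs hz).2.1)
    · rw [eq_bot_iff]
      intro a ha
      have hmem := (AddSubgroup.mem_sSup_of_directedOn ⟨y, hy⟩ hch.directedOn).mp ha.1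
      obtain ⟨S, hS, haS⟩ := hmem
      have : a ∈ S ⊓ W := ⟨haS, ha.2⟩
      rw [(hcs hS).2.2] at this
      exact this
  obtain ⟨m, hm1, hm2⟩ := zorn_le_nonempty₀ s hchain C₀ ⟨le_refl _, hC₀B, hC₀W⟩
  exact ⟨m, hm1, hm2.1.2.1, hm2.1.2.2, fun C' h1 h2 h3 =>
    le_antisymm (hm2.2 ⟨le_trans (le_trans hm2.1.1 h1) (le_refl _), h2, h3⟩ h1) h1⟩

lemma split_lemma (hp : p.Prime) (B W C : AddSubgroup A)
    (hB : ∀ b ∈ B, ∃ k : ℕ, (p ^ k : ℕ) • b = 0)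
    (hWB : W ≤ B) (hCB : C ≤ B) (hdisj : C ⊓ W = ⊥)
    (hmax : ∀ C' : AddSubgroup A, C ≤ C' → C' ≤ B → C' ⊓ W = ⊥ → C' = C)
    (hH : ∀ b ∈ B, p • b ∈ W ⊔ C → ∃ w ∈ W, p • b - p • w ∈ C) :
    ∀ b ∈ B, b ∈ W ⊔ C := by
  intro b hb
  by_contra hbWC
  obtain ⟨k, hk⟩ := hB b hb
  have hex : ∃ j, p ^ j • b ∈ W ⊔ C := ⟨k, by rw [hk]; exact zero_mem _⟩
  classical
  set j := Nat.find hex with hj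
  have hjmem : p ^ j • b ∈ W ⊔ C := Nat.find_spec hex
  have hjne : j ≠ 0 := by
    intro h0
    apply hbWC
    have := hjmem
    rw [h0, pow_zero, one_smul] at this
    exact this
  set bt := p ^ (j - 1) • b with hbt
  have hbtB : bt ∈ B := AddSubgroup.nsmul_mem B hb _
  have hbtW : bt ∉ W ⊔ C := Nat.find_min hex (by omega)
  have hpbt : p • bt ∈ W ⊔ C := by
    have : p • bt = p ^ j • b := by
      have hje : j - 1 + 1 = j := by omega
      rw [hbt, smul_smul, ← pow_succ', hje]
    rw [this]; exact hjmem
  obtain ⟨w, hwW, hwC⟩ := hH bt hbtB hpbt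
  set b' := bt - w with hb'
  have hb'B : b' ∈ B := sub_mem hbtB (hWB hwW)
  have hpb' : p • b' ∈ C := by rw [hb', smul_sub]; exact hwC
  have hb'WC : b' ∉ W ⊔ C := by
    intro h
    apply hbtW
    have : bt = b' + w := by rw [hb']; abel
    rw [this]
    exact add_mem h (AddSubgroup.mem_sup_left hwW)
  have hb'C : b' ∉ C := fun h => hb'WC (AddSubgroup.mem_sup_right h)
  set C' := C ⊔ AddSubgroup.zmultiples b' with hC'
  have hCC' : C ≤ C' := le_sup_left
  have hC'B : C' ≤ B := sup_le hCB (AddSubgroup.zmultiples_le.mpr hb'B)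
  have hC'W : C' ⊓ W ≠ ⊥ := by
    intro h
    exact hb'C (hmax C' hCC' hC'B h ▸ AddSubgroup.mem_sup_right (AddSubgroup.mem_zmultiples b'))
  obtain ⟨⟨a, haC'W⟩, ha0⟩ := AddSubgroup.ne_bot_iff_exists_ne_zero.mp hC'W
  have ha0' : a ≠ 0 := by simpa [Subtype.ext_iff] using ha0
  obtain ⟨c₁, hc₁, m, hm, hsum⟩ := AddSubgroup.mem_sup.mp haC'W.1
  obtain ⟨t, ht⟩ := AddSubgroup.mem_zmultiples_iff.mp hm
  by_cases hpt : (p : ℤ) ∣ t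
  · obtain ⟨t', rfl⟩ := hpt
    have hmC : m ∈ C := by
      rw [← ht, mul_comm, mul_smul]
      have : (p:ℤ) • b' = p • b' := by rw [natCast_zsmul]
      rw [this]
      exact AddSubgroup.zsmul_mem C hpb' t'
    have haC : a ∈ C ⊓ W := ⟨hsum ▸ add_mem hc₁ hmC, haC'W.2⟩
    rw [hdisj] at haC
    exact ha0' haC
  · obtain ⟨k', hk'⟩ := hB b' hb'B
    obtain ⟨γ, hγ⟩ := exists_zsmul_inv hp hpt hk'
    apply hb'WC
    rw [← hγ, ht]
    have hmWC : m ∈ W ⊔ C := by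
      have : m = a - c₁ := by rw [← hsum]; abel
      rw [this]
      exact sub_mem (AddSubgroup.mem_sup_left haC'W.2) (AddSubgroup.mem_sup_right hc₁)
    exact AddSubgroup.zsmul_mem _ hmWC γ

/-- The common endgame: if `W ⊔ C = B` with `W, C` disjoint, `W = zmultiples w` a "cyclic"
subgroup witnessing the socle generation, we contradict either indecomposability or the
independence of `z, z'`. -/
lemma endgame (hp : p.Prime) (B W C : AddSubgroup A) (hInd : Indecomp B)
    (hdisj : C ⊓ W = ⊥) (hsup : W ⊔ C = B) (hWne : W ≠ ⊥)
    {w u z z' : A} {n : ℕ}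
    (hWz : ∀ a ∈ B, C = ⊥ → ∃ s : ℤ, a = s • w)
    (hu : (p^n : ℕ) • w = u) (hu0 : u ≠ 0) (hw0 : (p^(n+1) : ℕ) • w = 0)
    (hz : z ∈ B) (hz' : z' ∈ B) (hpz : p • z = 0) (hpz' : p • z' = 0) (hz0 : z ≠ 0)
    (hcon : ∀ s : ℤ, z' ≠ s • z) : False := by
  by_cases hC : C = ⊥
  · obtain ⟨s', hs'⟩ := hWz z' hz' hC
    obtain ⟨s₀, hs₀⟩ := hWz z hz hC
    by_cases hz'0 : z' = 0
    · exact hcon 0 (by rw [hz'0, zero_smul])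
    obtain ⟨t, htz', htnd⟩ := cyclic_socle hp hu hu0 hw0 s' hs' hpz' hz'0
    obtain ⟨t₀, htz, ht₀nd⟩ := cyclic_socle hp hu hu0 hw0 s₀ hs₀ hpz hz0
    have hpu : (p ^ 1 : ℕ) • u = 0 := by
      rw [pow_one, ← hu, smul_smul, ← pow_succ', hw0]
    obtain ⟨γ, hγ⟩ := exists_zsmul_inv hp ht₀nd hpu
    apply hcon (t * γ)
    rw [htz', ← hγ, ← htz, mul_smul]
  · exact hInd.2 ⟨W, C, hWne, hC, by rw [inf_comm]; exact hdisj, hsup⟩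

lemma socle_caseA (hp : p.Prime) (B : AddSubgroup A)
    (hBk : ∀ b ∈ B, ∃ k : ℕ, (p ^ k : ℕ) • b = 0) (hInd : Indecomp B)
    {z z' : A} (hz : z ∈ B) (hz' : z' ∈ B) (hpz : p • z = 0) (hpz' : p • z' = 0)
    (hz0 : z ≠ 0) (hcon : ∀ s : ℤ, z' ≠ s • z)
    (hfin : ∃ u, u ∈ B ∧ u ≠ 0 ∧ p • u = 0 ∧ ∃ n, ∀ v ∈ B, ¬ p ^ n • v = u) : False := by
  classical
  obtain ⟨u, huB, hu0, hpu, n₀, hn₀⟩ := hfin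
  have hexQ : ∃ m, ¬ ∃ v ∈ B, p ^ m • v = u := by
    refine ⟨n₀, ?_⟩
    push_neg
    exact hn₀
  set N := Nat.find hexQ with hN
  have hQN : ¬ ∃ v ∈ B, p ^ N • v = u := Nat.find_spec hexQ
  have hN0 : N ≠ 0 := by
    intro h0
    exact (h0 ▸ hQN) ⟨u, huB, by rw [pow_zero, one_smul]⟩
  set n := N - 1 with hn
  obtain ⟨w, hwB, hwu⟩ : ∃ v ∈ B, p ^ n • v = u := not_not.mp (Nat.find_min hexQ (by omega))
  have hn1 : n + 1 = N := by omega
  have hw0 : (p ^ (n+1) : ℕ) • w = 0 := by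
    rw [pow_succ', mul_smul, hwu, hpu]
  have hnotdiv : ∀ v ∈ B, ¬ (p ^ (n+1) : ℕ) • v = u := by
    intro v hv hvu
    exact hQN ⟨v, hv, by rw [← hn1]; exact hvu⟩
  set W := AddSubgroup.zmultiples w with hW
  have hWB : W ≤ B := AddSubgroup.zmultiples_le.mpr hwB
  set φ : A →+ A := AddMonoidHom.mk' (fun a => (p^(n+1) : ℕ) • a) (fun a b => smul_add _ a b) with hφ
  set C₀ := AddSubgroup.map φ B with hC₀
  have hC₀B : C₀ ≤ B := by
    rintro _ ⟨v, hv, rfl⟩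
    exact AddSubgroup.nsmul_mem B hv _
  have hpu1 : (p ^ 1 : ℕ) • u = 0 := by rw [pow_one]; exact hpu
  have hC₀W : C₀ ⊓ W = ⊥ := by
    rw [eq_bot_iff]
    rintro a ⟨haC, haW⟩
    obtain ⟨s, hs⟩ := AddSubgroup.mem_zmultiples_iff.mp haW
    obtain ⟨v, hv, hva⟩ := haC
    rw [AddSubgroup.mem_bot]
    by_contra ha0
    have hs0 : s ≠ 0 := by rintro rfl; rw [zero_smul] at hs; exact ha0 hs.symm
    obtain ⟨j, t, rfl, hnd⟩ := exists_pval_int hp.two_le s hs0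
    have hjn : j ≤ n := by
      by_contra hjgt
      apply ha0
      rw [← hs, show (p:ℤ)^j * t = t * (p:ℤ)^(j-(n+1)) * (p:ℤ)^(n+1) by
          rw [mul_assoc, ← pow_add, show j - (n+1) + (n+1) = j by omega]; ring,
        mul_smul, mul_smul, cast1 (n+1) w, hw0, smul_zero, smul_zero]
    -- t • u = p^(n+1) • (something in B)
    have hta : t • u = (p ^ (n+1) : ℕ) • ((p ^ (n-j) : ℕ) • v) := by
      have e1 : t • u = ((p:ℤ)^(n-j)) • a := by
        rw [← hs, ← mul_smul, show (p:ℤ)^(n-j) * ((p:ℤ)^j * t) = t * (p:ℤ)^n by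
          rw [← mul_assoc, ← pow_add, show n - j + j = n by omega]; ring, mul_smul, cast1, hwu]
      rw [e1, ← hva]
      show ((p:ℤ)^(n-j)) • ((p^(n+1) : ℕ) • v) = _
      rw [cast1 (n-j), smul_smul, smul_smul, mul_comm]
    obtain ⟨γ, hγ⟩ := exists_zsmul_inv hp hnd hpu1
    refine hnotdiv (γ • ((p ^ (n-j) : ℕ) • v)) ?_ ?_
    · exact AddSubgroup.zsmul_mem B (AddSubgroup.nsmul_mem B hv _) γ
    · rw [smul_comm, ← hta, hγ]
  obtain ⟨C, hC₀C, hCB, hCW, hCmax⟩ := exists_maximal_disjoint B W C₀ hC₀B hC₀W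
  have hH : ∀ b ∈ B, p • b ∈ W ⊔ C → ∃ w' ∈ W, p • b - p • w' ∈ C := by
    intro b hb hpb
    obtain ⟨mw, hmw, c, hc, hsum⟩ := AddSubgroup.mem_sup.mp hpb
    obtain ⟨s, hs⟩ := AddSubgroup.mem_zmultiples_iff.mp hmw
    have h1 : (p ^ (n+1) : ℕ) • b ∈ C := hC₀C ⟨b, hb, rfl⟩
    have h2 : (p ^ n : ℕ) • mw ∈ C := by
      have e2 : (p ^ n : ℕ) • mw = (p ^ (n+1) : ℕ) • b - (p ^ n : ℕ) • c := by
        have e2' : mw = p • b - c := by rw [← hsum]; abel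
        rw [e2', smul_sub, smul_smul, ← pow_succ]
      rw [e2]
      exact sub_mem h1 (AddSubgroup.nsmul_mem C hc _)
    have h3 : (p ^ n : ℕ) • mw ∈ C ⊓ W := ⟨h2, AddSubgroup.nsmul_mem W hmw _⟩
    rw [hCW] at h3
    have h4 : (p ^ n : ℕ) • mw = 0 := h3
    have hps : (p:ℤ) ∣ s := by
      by_contra hnd
      obtain ⟨γ, hγ⟩ := exists_zsmul_inv hp hnd hpu1
      apply hu0
      rw [← hγ]
      have e4 : s • u = 0 := by
        rw [← hwu, smul_comm, hs, h4]
      rw [e4, smul_zero]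
    obtain ⟨s', rfl⟩ := hps
    refine ⟨s' • w, AddSubgroup.mem_zmultiples_iff.mpr ⟨s', rfl⟩, ?_⟩
    have e5 : p • (s' • w) = mw := by
      rw [← hs, mul_smul, natCast_zsmul]
    rw [e5, show p • b - mw = c by rw [← hsum]; abel]
    exact hc
  have hBsub := split_lemma hp B W C hBk hWB hCB hCW hCmax hH
  have hsup : W ⊔ C = B := le_antisymm (sup_le hWB hCB) hBsub
  have hWne : W ≠ ⊥ := by
    have hw00 : w ≠ 0 := by
      rintro rfl
      rw [smul_zero] at hwu
      exact hu0 hwu.symm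
    exact AddSubgroup.ne_bot_iff_exists_ne_zero.mpr
      ⟨⟨w, AddSubgroup.mem_zmultiples w⟩, by simpa [Subtype.ext_iff] using hw00⟩
  refine endgame hp B W C hInd hCW hsup hWne ?_ hwu hu0 hw0 hz hz' hpz hpz' hz0 hcon
  intro a ha hCbot
  have : a ∈ W := by
    rw [hCbot, sup_bot_eq] at hsup
    rw [hsup]; exact ha
  obtain ⟨s, hs⟩ := AddSubgroup.mem_zmultiples_iff.mp this
  exact ⟨s, hs.symm⟩

lemma socle_caseB (hp : p.Prime) (B : AddSubgroup A)
    (hBk : ∀ b ∈ B, ∃ k : ℕ, (p ^ k : ℕ) • b = 0) (hInd : Indecomp B)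
    {z z' : A} (hz : z ∈ B) (hz' : z' ∈ B) (hpz : p • z = 0) (hpz' : p • z' = 0)
    (hz0 : z ≠ 0) (hcon : ∀ s : ℤ, z' ≠ s • z)
    (hdiv0 : ∀ u ∈ B, u ≠ 0 → p • u = 0 → ∀ m : ℕ, ∃ v ∈ B, p ^ m • v = u) : False := by
  classical
  -- B is p-divisible
  have hdiv : ∀ b ∈ B, ∃ v ∈ B, p • v = b := by
    have aux : ∀ k : ℕ, ∀ b ∈ B, (p^k : ℕ) • b = 0 → ∃ v ∈ B, p • v = b := by
      intro k
      induction k with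
      | zero =>
        intro b _ hb0
        rw [pow_zero, one_smul] at hb0
        exact ⟨0, zero_mem B, by rw [hb0, smul_zero]⟩
      | succ k IH =>
        intro b hb hbk
        by_cases hpkb : (p^k : ℕ) • b = 0
        · exact IH b hb hpkb
        · have hu0 : (p^k : ℕ) • b ≠ 0 := hpkb
          have hpu : p • ((p^k : ℕ) • b) = 0 := by
            rw [smul_smul, mul_comm, ← pow_succ]; exact hbk
          obtain ⟨v', hv', hv'u⟩ :=
            hdiv0 _ (AddSubgroup.nsmul_mem B hb _) hu0 hpu (k+1)
          have hb2 : (p^k : ℕ) • (b - p • v') = 0 := by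
            rw [smul_sub, smul_smul, ← pow_succ, hv'u, sub_self]
          obtain ⟨v'', hv'', hv''b⟩ :=
            IH _ (sub_mem hb (AddSubgroup.nsmul_mem B hv' _)) hb2
          exact ⟨v' + v'', add_mem hv' hv'', by rw [smul_add, hv''b]; abel⟩
    intro b hb
    obtain ⟨k, hk⟩ := hBk b hb
    exact aux k b hb hk
  -- coherent chain of p-th roots of z
  have step : ∀ v : A, v ∈ B → {w : A // w ∈ B ∧ p • w = v} := fun v hv =>
    ⟨(hdiv v hv).choose, (hdiv v hv).choose_spec⟩
  set x : ℕ → {v : A // v ∈ B} :=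
    fun n => Nat.rec ⟨z, hz⟩ (fun _ prev => ⟨(step prev.1 prev.2).1, (step prev.1 prev.2).2.1⟩) n
    with hx
  have hx0 : (x 0).1 = z := rfl
  have hxs : ∀ m, p • (x (m+1)).1 = (x m).1 := fun m => (step (x m).1 (x m).2).2.2
  have xpow : ∀ d m : ℕ, (p^d : ℕ) • (x (m+d)).1 = (x m).1 := by
    intro d
    induction d with
    | zero => intro m; rw [Nat.add_zero, pow_zero, one_smul]
    | succ d IH =>
      intro m
      rw [pow_succ, mul_smul, show m + (d+1) = (m+d) + 1 by omega, hxs, IH]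
  have hxz : ∀ m : ℕ, (p^m : ℕ) • (x m).1 = z := by
    intro m
    have := xpow m 0
    rw [zero_add] at this
    rw [this, hx0]
  -- the subgroup W = union of multiples of the chain
  have hrep : ∀ (m : ℕ) (s : ℤ) (M : ℕ), m ≤ M →
      s • (x m).1 = (s * (p:ℤ)^(M-m)) • (x M).1 := by
    intro m s M hmM
    have e1 : (x m).1 = (p^(M-m) : ℕ) • (x M).1 := by
      have := xpow (M-m) m
      rw [show m + (M-m) = M by omega] at this
      exact this.symm
    rw [e1, ← natCast_zsmul, smul_smul]
    congr 2
  set W : AddSubgroup A :=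
    { carrier := {a | ∃ (m : ℕ) (s : ℤ), a = s • (x m).1}
      zero_mem' := ⟨0, 0, (zero_smul ℤ _).symm⟩
      add_mem' := by
        rintro a b ⟨m, s, rfl⟩ ⟨m', s', rfl⟩
        refine ⟨max m m', s * (p:ℤ)^(max m m' - m) + s' * (p:ℤ)^(max m m' - m'), ?_⟩
        rw [hrep m s (max m m') (le_max_left _ _), hrep m' s' (max m m') (le_max_right _ _),
          add_smul]
      neg_mem' := by
        rintro a ⟨m, s, rfl⟩
        exact ⟨m, -s, by rw [neg_smul]⟩ } with hWdef
  have hWmem : ∀ a : A, a ∈ W ↔ ∃ (m : ℕ) (s : ℤ), a = s • (x m).1 := fun a => Iff.rfl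
  have hWB : W ≤ B := by
    rintro a ⟨m, s, rfl⟩
    exact AddSubgroup.zsmul_mem B (x m).2 s
  have hzW : z ∈ W := ⟨0, 1, by rw [hx0, one_smul]⟩
  obtain ⟨C, _, hCB, hCW, hCmax⟩ := exists_maximal_disjoint B W ⊥ bot_le (by rw [bot_inf_eq])
  have hH : ∀ b ∈ B, p • b ∈ W ⊔ C → ∃ w' ∈ W, p • b - p • w' ∈ C := by
    intro b hb hpb
    obtain ⟨a, haW, c, hc, hsum⟩ := AddSubgroup.mem_sup.mp hpb
    obtain ⟨m, s, rfl⟩ := haW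
    refine ⟨s • (x (m+1)).1, ⟨m+1, s, rfl⟩, ?_⟩
    have e2 : p • (s • (x (m+1)).1) = s • (x m).1 := by
      rw [smul_comm, hxs]
    rw [e2, show p • b - s • (x m).1 = c by rw [← hsum]; abel]
    exact hc
  have hBsub := split_lemma hp B W C hBk hWB hCB hCW hCmax hH
  have hsup : W ⊔ C = B := le_antisymm (sup_le hWB hCB) hBsub
  by_cases hC : C = ⊥
  · -- B = W; z' is a multiple of some x m, cyclic analysis
    have hz'W : z' ∈ W := by
      rw [hC, sup_bot_eq] at hsup
      rw [hsup]; exact hz'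
    obtain ⟨m, s, hs⟩ := hz'W
    by_cases hz'0 : z' = 0
    · exact hcon 0 (by rw [hz'0, zero_smul])
    have hw0 : (p^(m+1) : ℕ) • (x m).1 = 0 := by
      rw [pow_succ', mul_smul, hxz, hpz]
    obtain ⟨t, htz', _⟩ := cyclic_socle hp (hxz m) hz0 hw0 s hs hpz' hz'0
    exact hcon t htz'
  · have hWne : W ≠ ⊥ := by
      refine AddSubgroup.ne_bot_iff_exists_ne_zero.mpr ⟨⟨z, hzW⟩, ?_⟩
      simpa [Subtype.ext_iff] using hz0
    exact hInd.2 ⟨W, C, hWne, hC, by rw [inf_comm]; exact hCW, hsup⟩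

lemma socle_claim (hp : p.Prime) (B : AddSubgroup A)
    (hBk : ∀ b ∈ B, ∃ k : ℕ, (p ^ k : ℕ) • b = 0) (hInd : Indecomp B)
    {z z' : A} (hz : z ∈ B) (hz' : z' ∈ B) (hpz : p • z = 0) (hpz' : p • z' = 0)
    (hz0 : z ≠ 0) : ∃ s : ℤ, z' = s • z := by
  by_contra hcon
  push_neg at hcon
  by_cases hfin : ∃ u, u ∈ B ∧ u ≠ 0 ∧ p • u = 0 ∧ ∃ n, ∀ v ∈ B, ¬ p ^ n • v = u
  · exact socle_caseA hp B hBk hInd hz hz' hpz hpz' hz0 hcon hfin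
  · push_neg at hfin
    exact socle_caseB hp B hBk hInd hz hz' hpz hpz' hz0 hcon fun u hu hu0 hpu m => by
      obtain ⟨v, hv, hvu⟩ := hfin u hu hu0 hpu m
      exact ⟨v, hv, hvu⟩

/-- Key lemma: everything of "order dividing b" in the indecomposable `B` is a multiple of b. -/
lemma mem_multiples (hp : p.Prime) (B : AddSubgroup A)
    (hBk : ∀ b ∈ B, ∃ k : ℕ, (p ^ k : ℕ) • b = 0) (hInd : Indecomp B) :
    ∀ (i : ℕ) (z b : A), z ∈ B → b ∈ B → (p^i : ℕ) • z = 0 →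
      (∀ m : ℕ, (p^m : ℕ) • b = 0 → (p^m : ℕ) • z = 0) → ∃ s : ℤ, z = s • b := by
  intro i
  induction i with
  | zero =>
    intro z b hz _ hiz _
    rw [pow_zero, one_smul] at hiz
    exact ⟨0, by rw [hiz, zero_smul]⟩
  | succ i IH =>
    intro z b hzB hbB hiz hord
    by_cases hb0 : b = 0
    · have hz0 : z = 0 := by
        have := hord 0 (by rw [hb0, smul_zero])
        rwa [pow_zero, one_smul] at this
      exact ⟨0, by rw [hz0, zero_smul]⟩
    by_cases hz0 : z = 0
    · exact ⟨0, by rw [hz0, zero_smul]⟩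
    -- apply IH to p•z, p•b
    have h1 : (p^i : ℕ) • (p • z) = 0 := by
      rw [smul_smul, ← pow_succ]; exact hiz
    have h2 : ∀ m : ℕ, (p^m : ℕ) • (p • b) = 0 → (p^m : ℕ) • (p • z) = 0 := by
      intro m hm
      rw [smul_smul, mul_comm, ← pow_succ'] at hm ⊢
      exact hord (m+1) hm
    obtain ⟨s, hs⟩ := IH (p • z) (p • b) (AddSubgroup.nsmul_mem B hzB _)
      (AddSubgroup.nsmul_mem B hbB _) h1 h2
    -- the defect is in the socle
    set w := z - s • b with hw
    have hwB : w ∈ B := sub_mem hzB (AddSubgroup.zsmul_mem B hbB s)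
    have hpw : p • w = 0 := by
      rw [hw, smul_sub, smul_comm, ← hs, sub_self]
    -- least n with p^n • b = 0
    classical
    have hexn : ∃ n : ℕ, (p^n : ℕ) • b = 0 := hBk b hbB
    set n := Nat.find hexn with hn
    have hnspec : (p^n : ℕ) • b = 0 := Nat.find_spec hexn
    have hn0 : n ≠ 0 := by
      intro h0
      apply hb0
      have := hnspec
      rw [h0, pow_zero, one_smul] at this
      exact this
    set e := (p^(n-1) : ℕ) • b with he
    have heB : e ∈ B := AddSubgroup.nsmul_mem B hbB _
    have he0 : e ≠ 0 := Nat.find_min hexn (by omega)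
    have hpe : p • e = 0 := by
      rw [he, smul_smul, ← pow_succ', show n - 1 + 1 = n by omega]
      exact hnspec
    obtain ⟨t, ht⟩ := socle_claim hp B hBk hInd heB hwB hpe hpw he0
    refine ⟨s + t * (p:ℤ)^(n-1), ?_⟩
    have : z = s • b + w := by rw [hw]; abel
    rw [this, ht, he, add_smul]
    congr 1
    rw [mul_smul, ← natCast_zsmul b (p^(n-1)), smul_smul, smul_smul]
    congr 1

/-- automorphism-like maps preserving B commute on B -/
lemma comm_on_indecomp (hp : p.Prime) (B : AddSubgroup A)
    (hBk : ∀ b ∈ B, ∃ k : ℕ, (p ^ k : ℕ) • b = 0) (hInd : Indecomp B)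
    (x y : AddAut A) (hx : ∀ a ∈ B, x a ∈ B) (hy : ∀ a ∈ B, y a ∈ B) :
    ∀ a ∈ B, x (y a) = y (x a) := by
  intro b hb
  obtain ⟨i, hi⟩ := hBk (y b) (hy b hb)
  have hordy : ∀ m : ℕ, (p^m : ℕ) • b = 0 → (p^m : ℕ) • (y b) = 0 := by
    intro m hm
    rw [← map_nsmul, hm, map_zero]
  obtain ⟨s, hs⟩ := mem_multiples hp B hBk hInd i (y b) b (hy b hb) hb hi hordy
  obtain ⟨i', hi'⟩ := hBk (x b) (hx b hb)
  have hordx : ∀ m : ℕ, (p^m : ℕ) • b = 0 → (p^m : ℕ) • (x b) = 0 := by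
    intro m hm
    rw [← map_nsmul, hm, map_zero]
  obtain ⟨t, ht⟩ := mem_multiples hp B hBk hInd i' (x b) b (hx b hb) hb hi' hordx
  rw [hs, ht, map_zsmul, map_zsmul, hs, ht, smul_comm]

lemma no2 (h2 : pComponent A 2 = ⊥) {a : A} (ha : a + a = 0) : a = 0 := by
  have hmem : a ∈ pComponent A 2 := ⟨1, by rw [pow_one, two_smul]; exact ha⟩
  rw [h2] at hmem
  exact hmem

lemma exists_half (hA : AddMonoid.IsTorsion A) (h2 : pComponent A 2 = ⊥) (a : A) :
    ∃ m : ℕ, (2 * m) • a = a := by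
  have hfin : IsOfFinAddOrder a := hA a
  set n := addOrderOf a with hn
  have hn0 : n ≠ 0 := hfin.addOrderOf_pos.ne'
  have hodd : ¬ 2 ∣ n := by
    intro ⟨k, hk⟩
    have hk0 : k ≠ 0 := by rintro rfl; omega
    have h2k : (k • a) + (k • a) = 0 := by
      rw [← two_smul ℕ, smul_smul, ← hk, hn, addOrderOf_nsmul_eq_zero]
    have hka : k • a = 0 := no2 h2 h2k
    have hdvd : n ∣ k := addOrderOf_dvd_of_nsmul_eq_zero hka
    have := Nat.le_of_dvd (Nat.pos_of_ne_zero hk0) hdvd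
    omega
  have hodd' : n % 2 = 1 := by omega
  refine ⟨(n + 1) / 2, ?_⟩
  have h2m : 2 * ((n + 1) / 2) = n + 1 := by omega
  rw [h2m, add_nsmul, addOrderOf_nsmul_eq_zero, one_nsmul, zero_add]

/-- decomposition of an invariant subgroup along an involution -/
lemma inv_split (hA : AddMonoid.IsTorsion A) (h2 : pComponent A 2 = ⊥)
    {ε : AddAut A} (hε : ε * ε = 1) {S : AddSubgroup A} (hS : ∀ a ∈ S, ε a ∈ S) :
    ∀ a ∈ S, ∃ b c, b ∈ S ∧ c ∈ S ∧ ε b = b ∧ ε c = -c ∧ a = b + c := by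
  intro a ha
  have hεε : ∀ v : A, ε (ε v) = v := fun v => by
    have := DFunLike.congr_fun hε v
    exact this
  obtain ⟨m, hm⟩ := exists_half hA h2 a
  refine ⟨m • (a + ε a), m • (a - ε a), ?_, ?_, ?_, ?_, ?_⟩
  · exact AddSubgroup.nsmul_mem S (add_mem ha (hS a ha)) m
  · exact AddSubgroup.nsmul_mem S (sub_mem ha (hS a ha)) m
  · rw [map_nsmul, map_add, hεε, add_comm]
  · rw [map_nsmul, map_sub, hεε, ← neg_sub, smul_neg]
  · rw [← smul_add, show a + ε a + (a - ε a) = 2 • a by rw [two_smul]; abel,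
      smul_smul, mul_comm, hm]

lemma posneg_inf (h2 : pComponent A 2 = ⊥) (ε : AddAut A) :
    posPart ε ⊓ negPart ε = ⊥ := by
  rw [eq_bot_iff]
  rintro a ⟨hpos, hneg⟩
  have h1 : ε a = a := hpos
  have h2' : ε a = -a := hneg
  have h3 : a = -a := h1.symm.trans h2'
  have h4 : a + a = 0 := by
    nth_rewrite 1 [h3]
    exact neg_add_cancel a
  exact no2 h2 h4

lemma sum_unique {S T : AddSubgroup A} (hST : S ⊓ T = ⊥) {s s' t t' : A}
    (hs : s ∈ S) (hs' : s' ∈ S) (ht : t ∈ T) (ht' : t' ∈ T)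
    (h : s + t = s' + t') : s = s' ∧ t = t' := by
  have h1 : s - s' ∈ S := sub_mem hs hs'
  have h2 : s - s' ∈ T := by
    have : s - s' = t' - t := by
      have := h
      rw [← sub_eq_zero] at this ⊢
      rw [← this]
      abel
    rw [this]
    exact sub_mem ht' ht
  have h3 : s - s' ∈ S ⊓ T := ⟨h1, h2⟩
  rw [hST] at h3
  have h4 : s = s' := by rwa [AddSubgroup.mem_bot, sub_eq_zero] at h3
  refine ⟨h4, ?_⟩
  have h5 := h
  rw [h4, add_left_cancel_iff] at h5
  exact h5

lemma commute_iff (hA : AddMonoid.IsTorsion A) (h2 : pComponent A 2 = ⊥)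
    {ε : AddAut A} (hε : ε * ε = 1) (x : AddAut A) :
    x * ε = ε * x ↔
      (∀ a ∈ posPart ε, x a ∈ posPart ε) ∧ (∀ a ∈ negPart ε, x a ∈ negPart ε) := by
  constructor
  · intro h
    have hcomm : ∀ a, x (ε a) = ε (x a) := fun a => DFunLike.congr_fun h a
    constructor
    · intro a ha
      show ε (x a) = x a
      rw [← hcomm]
      have : ε a = a := ha
      rw [this]
    · intro a ha
      show ε (x a) = -(x a)
      rw [← hcomm]
      have : ε a = -a := ha
      rw [this, map_neg]
  · rintro ⟨hpos, hneg⟩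
    ext a
    show x (ε a) = ε (x a)
    obtain ⟨b, c, _, _, hb, hc, rfl⟩ :=
      inv_split hA h2 hε (fun v _ => AddSubgroup.mem_top (ε v)) a (AddSubgroup.mem_top a)
    have hxb : ε (x b) = x b := hpos b hb
    have hxc : ε (x c) = -(x c) := hneg c hc
    rw [map_add, map_add, hb, hc, map_add, map_neg, map_add, hxb, hxc]

lemma ext_aut (S T : AddSubgroup A) (hinf : S ⊓ T = ⊥) (hsup : S ⊔ T = ⊤)
    (g : AddAut ↥S) :
    ∃ ghat : AddAut A, (∀ s : ↥S, ghat ↑s = ↑(g s)) ∧ (∀ t ∈ T, ghat t = t) := by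
  classical
  have hdec : ∀ a : A, ∃ s, s ∈ S ∧ ∃ t, t ∈ T ∧ s + t = a := by
    intro a
    have ha : a ∈ S ⊔ T := hsup ▸ AddSubgroup.mem_top a
    obtain ⟨s, hs, t, ht, h⟩ := AddSubgroup.mem_sup.mp ha
    exact ⟨s, hs, t, ht, h⟩
  choose σ hσ τ hτ hστ using hdec
  have huniq : ∀ (a s t : A), s ∈ S → t ∈ T → s + t = a → σ a = s ∧ τ a = t := by
    intro a s t hs ht h
    exact sum_unique hinf (hσ a) hs (hτ a) ht (by rw [hστ a, h])
  have hσadd : ∀ a b, σ (a+b) = σ a + σ b ∧ τ (a+b) = τ a + τ b := by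
    intro a b
    refine huniq (a+b) (σ a + σ b) (τ a + τ b)
      (add_mem (hσ a) (hσ b)) (add_mem (hτ a) (hτ b)) ?_
    calc σ a + σ b + (τ a + τ b) = (σ a + τ a) + (σ b + τ b) := by abel
    _ = a + b := by rw [hστ a, hστ b]
  set f : A → A := fun a => ↑(g ⟨σ a, hσ a⟩) + τ a with hf
  set f' : A → A := fun a => ↑(g.symm ⟨σ a, hσ a⟩) + τ a with hf'
  have hff' : ∀ a, f' (f a) = a := by
    intro a
    have h1 := huniq (f a) ↑(g ⟨σ a, hσ a⟩) (τ a) (g ⟨σ a, hσ a⟩).2 (hτ a) rfl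
    show ↑(g.symm ⟨σ (f a), hσ (f a)⟩) + τ (f a) = a
    have h2 : (⟨σ (f a), hσ (f a)⟩ : ↥S) = g ⟨σ a, hσ a⟩ := Subtype.ext h1.1
    rw [h2, h1.2, AddEquiv.symm_apply_apply, hστ a]
  have hf'f : ∀ a, f (f' a) = a := by
    intro a
    have h1 := huniq (f' a) ↑(g.symm ⟨σ a, hσ a⟩) (τ a) (g.symm ⟨σ a, hσ a⟩).2 (hτ a) rfl
    show ↑(g ⟨σ (f' a), hσ (f' a)⟩) + τ (f' a) = a
    have h2 : (⟨σ (f' a), hσ (f' a)⟩ : ↥S) = g.symm ⟨σ a, hσ a⟩ := Subtype.ext h1.1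
    rw [h2, h1.2, AddEquiv.apply_symm_apply, hστ a]
  have hfadd : ∀ a b, f (a + b) = f a + f b := by
    intro a b
    show ↑(g ⟨σ (a+b), hσ (a+b)⟩) + τ (a+b) = (↑(g ⟨σ a, hσ a⟩) + τ a) + (↑(g ⟨σ b, hσ b⟩) + τ b)
    have h2 : (⟨σ (a+b), hσ (a+b)⟩ : ↥S) = ⟨σ a, hσ a⟩ + ⟨σ b, hσ b⟩ :=
      Subtype.ext (hσadd a b).1
    rw [h2, map_add, (hσadd a b).2]
    push_cast
    abel
  refine ⟨{ toFun := f, invFun := f', left_inv := hff', right_inv := hf'f,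
            map_add' := hfadd }, ?_, ?_⟩
  · intro s
    show ↑(g ⟨σ ↑s, hσ ↑s⟩) + τ ↑s = ↑(g s)
    have h1 := huniq ↑s ↑s 0 s.2 (zero_mem T) (add_zero (s : A))
    have h2 : (⟨σ ↑s, hσ ↑s⟩ : ↥S) = s := Subtype.ext h1.1
    rw [h2, h1.2, add_zero]
  · intro t ht
    show ↑(g ⟨σ t, hσ t⟩) + τ t = t
    have h1 := huniq t 0 t (zero_mem S) ht (zero_add t)
    have h2 : (⟨σ t, hσ t⟩ : ↥S) = 0 := Subtype.ext h1.1
    rw [h2, h1.2, map_zero]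
    show (0 : ↥S) + t = t
    simp

/-- restriction of an automorphism preserving `S` to an automorphism of `S` -/
def restrictAut {S : AddSubgroup A} (y : AddAut A)
    (h : (∀ a ∈ S, y a ∈ S) ∧ (∀ a ∈ S, y.symm a ∈ S)) : AddAut ↥S where
  toFun a := ⟨y (a : A), h.1 a a.2⟩
  invFun a := ⟨y.symm (a : A), h.2 a a.2⟩
  left_inv a := Subtype.ext (y.symm_apply_apply (a : A))
  right_inv a := Subtype.ext (y.apply_symm_apply (a : A))
  map_add' a b := Subtype.ext (map_add y (a : A) (b : A))

end AuxProof

/-- Let `A` be a periodic abelian group with trivial `2`-component and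
no cocyclic `p`-components, and let `ε₁, ε₂` be commuting extremal involutions in the
same `p`-component with `A_{ε₂} ⊆ A_{ε₁}^⊥`; set `C = A_{ε₁}^⊥ ∩ A_{ε₂}^⊥`.  Then
`x ∈ Aut A` lies in the center of the centralizer of `{ε₁, ε₂}` if and only if `x`
preserves each of `A_{ε₁}`, `A_{ε₂}` and `C`, and the restriction of `x` to `C` lies in
the center of `Aut C` (the restrictions to `A_{ε₁}` and `A_{ε₂}` being arbitrary). -/


theorem mem_center_centralizer_iff
    (A : Type*) [AddCommGroup A] (hA : AddMonoid.IsTorsion A)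
    (h2 : pComponent A 2 = ⊥)
    (hcc : ∀ p : ℕ, p.Prime → ¬ IsCocyclic ↥(pComponent A p))
    (p : ℕ) (hp : p.Prime)
    (ε₁ ε₂ : AddAut A) (B₁ B₁p B₂ B₂p : AddSubgroup A)
    (hε₁ : ExtremalWith ε₁ B₁ B₁p) (hε₂ : ExtremalWith ε₂ B₂ B₂p)
    (hcomm : ε₁ * ε₂ = ε₂ * ε₁)
    (hc₁ : B₁ ≤ pComponent A p) (hc₂ : B₂ ≤ pComponent A p)
    (hBB : B₂ ≤ B₁p)
    (x : AddAut A) :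
    (x ∈ Subgroup.centralizer {ε₁, ε₂} ∧
        ∀ y ∈ Subgroup.centralizer {ε₁, ε₂}, x * y = y * x) ↔
      (Preserves x B₁ ∧ Preserves x B₂ ∧ CentralOn x (B₁p ⊓ B₂p)) := by
  classical
  obtain ⟨hinv₁, hind₁, hor₁⟩ := hε₁
  obtain ⟨hinv₂, hind₂, hor₂⟩ := hε₂
  -- basic structure for ε₁
  have hinf₁ : B₁ ⊓ B₁p = ⊥ := by
    rcases hor₁ with ⟨ha, hb⟩ | ⟨ha, hb⟩ <;> rw [ha, hb]
    · exact posneg_inf h2 ε₁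
    · rw [inf_comm]; exact posneg_inf h2 ε₁
  have hinf₂ : B₂ ⊓ B₂p = ⊥ := by
    rcases hor₂ with ⟨ha, hb⟩ | ⟨ha, hb⟩ <;> rw [ha, hb]
    · exact posneg_inf h2 ε₂
    · rw [inf_comm]; exact posneg_inf h2 ε₂
  have hcom₁ : ∀ x' : AddAut A, x' * ε₁ = ε₁ * x' ↔
      ((∀ a ∈ B₁, x' a ∈ B₁) ∧ (∀ a ∈ B₁p, x' a ∈ B₁p)) := by
    intro x'
    rcases hor₁ with ⟨ha, hb⟩ | ⟨ha, hb⟩ <;> rw [ha, hb]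
    · exact commute_iff hA h2 hinv₁ x'
    · rw [commute_iff hA h2 hinv₁ x', and_comm]
  have hcom₂ : ∀ x' : AddAut A, x' * ε₂ = ε₂ * x' ↔
      ((∀ a ∈ B₂, x' a ∈ B₂) ∧ (∀ a ∈ B₂p, x' a ∈ B₂p)) := by
    intro x'
    rcases hor₂ with ⟨ha, hb⟩ | ⟨ha, hb⟩ <;> rw [ha, hb]
    · exact commute_iff hA h2 hinv₂ x'
    · rw [commute_iff hA h2 hinv₂ x', and_comm]
  have hsplit₁ : ∀ S : AddSubgroup A, (∀ a ∈ S, ε₁ a ∈ S) →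
      ∀ a ∈ S, ∃ b c, b ∈ B₁ ⊓ S ∧ c ∈ B₁p ⊓ S ∧ a = b + c := by
    intro S hS a ha
    obtain ⟨b, c, hbS, hcS, hb, hc, rfl⟩ := inv_split hA h2 hinv₁ hS a ha
    rcases hor₁ with ⟨h1, h1'⟩ | ⟨h1, h1'⟩
    · exact ⟨b, c, ⟨h1 ▸ hb, hbS⟩, ⟨h1' ▸ hc, hcS⟩, rfl⟩
    · exact ⟨c, b, ⟨h1 ▸ hc, hcS⟩, ⟨h1' ▸ hb, hbS⟩, add_comm b c⟩
  have hsplit₂ : ∀ S : AddSubgroup A, (∀ a ∈ S, ε₂ a ∈ S) →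
      ∀ a ∈ S, ∃ b c, b ∈ B₂ ⊓ S ∧ c ∈ B₂p ⊓ S ∧ a = b + c := by
    intro S hS a ha
    obtain ⟨b, c, hbS, hcS, hb, hc, rfl⟩ := inv_split hA h2 hinv₂ hS a ha
    rcases hor₂ with ⟨h1, h1'⟩ | ⟨h1, h1'⟩
    · exact ⟨b, c, ⟨h1 ▸ hb, hbS⟩, ⟨h1' ▸ hc, hcS⟩, rfl⟩
    · exact ⟨c, b, ⟨h1 ▸ hc, hcS⟩, ⟨h1' ▸ hb, hbS⟩, add_comm b c⟩
  -- mutual invariance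
  have hε₂B₁ : (∀ a ∈ B₁, ε₂ a ∈ B₁) ∧ (∀ a ∈ B₁p, ε₂ a ∈ B₁p) :=
    (hcom₁ ε₂).mp hcomm.symm
  have hε₁B₂ : (∀ a ∈ B₂, ε₁ a ∈ B₂) ∧ (∀ a ∈ B₂p, ε₁ a ∈ B₂p) :=
    (hcom₂ ε₁).mp hcomm
  -- B₁ ≤ B₂p
  have hB1B2 : B₁ ⊓ B₂ = ⊥ := by
    rw [eq_bot_iff, ← hinf₁]
    exact inf_le_inf_left B₁ hBB
  have h12p : B₁ ≤ B₂p := by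
    by_cases hV : B₂p ⊓ B₁ = ⊥
    · exfalso
      have hle : B₁ ≤ B₂ := by
        intro a ha
        obtain ⟨b, c, hb, hc, rfl⟩ := hsplit₂ B₁ hε₂B₁.1 a ha
        rw [hV] at hc
        rw [AddSubgroup.mem_bot.mp hc, add_zero]
        exact hb.1
      apply hind₁.1
      rw [eq_bot_iff, ← hB1B2]
      exact le_inf le_rfl hle
    by_cases hU : B₂ ⊓ B₁ = ⊥
    · intro a ha
      obtain ⟨b, c, hb, hc, rfl⟩ := hsplit₂ B₁ hε₂B₁.1 a ha
      rw [hU] at hb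
      rw [AddSubgroup.mem_bot.mp hb, zero_add]
      exact hc.1
    · exfalso
      refine hind₁.2 ⟨B₂ ⊓ B₁, B₂p ⊓ B₁, hU, hV, ?_, ?_⟩
      · rw [eq_bot_iff, ← hinf₂]
        exact le_inf (le_trans inf_le_left inf_le_left)
          (le_trans inf_le_right inf_le_left)
      · refine le_antisymm (sup_le inf_le_right inf_le_right) ?_
        intro a ha
        obtain ⟨b, c, hb, hc, rfl⟩ := hsplit₂ B₁ hε₂B₁.1 a ha
        exact add_mem (AddSubgroup.mem_sup_left hb) (AddSubgroup.mem_sup_right hc)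
  -- triple decomposition
  have trip : ∀ a : A, ∃ a₁ ∈ B₁, ∃ a₂ ∈ B₂, ∃ c ∈ B₁p ⊓ B₂p, a = a₁ + a₂ + c := by
    intro a
    obtain ⟨a₁, a', h1, h1', ha⟩ :=
      hsplit₁ ⊤ (fun v _ => AddSubgroup.mem_top _) a (AddSubgroup.mem_top a)
    obtain ⟨u, v, hu, hv, ha'⟩ := hsplit₂ B₁p hε₂B₁.2 a' h1'.1
    exact ⟨a₁, h1.1, u, hu.1, v, ⟨hv.2, hv.1⟩, by rw [ha, ha', add_assoc]⟩
  have hB1pe : B₂ ⊔ (B₁p ⊓ B₂p) = B₁p := by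
    refine le_antisymm (sup_le hBB inf_le_left) ?_
    intro a ha
    obtain ⟨a₁, h₁, a₂, h₂, c, hc, hEq⟩ := trip a
    have ha₁p : a₁ ∈ B₁p := by
      have : a₁ = a - a₂ - c := by rw [hEq]; abel
      rw [this]
      exact sub_mem (sub_mem ha (hBB h₂)) hc.1
    have ha₁ : a₁ ∈ B₁ ⊓ B₁p := ⟨h₁, ha₁p⟩
    rw [hinf₁, AddSubgroup.mem_bot] at ha₁
    rw [hEq, ha₁, zero_add]
    exact add_mem (AddSubgroup.mem_sup_left h₂) (AddSubgroup.mem_sup_right hc)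
  have hB2pe : B₁ ⊔ (B₁p ⊓ B₂p) = B₂p := by
    refine le_antisymm (sup_le h12p inf_le_right) ?_
    intro a ha
    obtain ⟨a₁, h₁, a₂, h₂, c, hc, hEq⟩ := trip a
    have ha₂p : a₂ ∈ B₂p := by
      have : a₂ = a - a₁ - c := by rw [hEq]; abel
      rw [this]
      exact sub_mem (sub_mem ha (h12p h₁)) hc.2
    have ha₂ : a₂ ∈ B₂ ⊓ B₂p := ⟨h₂, ha₂p⟩
    rw [hinf₂, AddSubgroup.mem_bot] at ha₂
    rw [hEq, ha₂, add_zero]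
    exact add_mem (AddSubgroup.mem_sup_left h₁) (AddSubgroup.mem_sup_right hc)
  have hCinf : (B₁p ⊓ B₂p) ⊓ (B₁ ⊔ B₂) = ⊥ := by
    rw [eq_bot_iff]
    intro a ha
    have haC : a ∈ B₁p ⊓ B₂p := (AddSubgroup.mem_inf.mp ha).1
    have haB : a ∈ B₁ ⊔ B₂ := (AddSubgroup.mem_inf.mp ha).2
    have haC1 : a ∈ B₁p := (AddSubgroup.mem_inf.mp haC).1
    have haC2 : a ∈ B₂p := (AddSubgroup.mem_inf.mp haC).2
    obtain ⟨a₁, h₁, a₂, h₂, hEq⟩ := AddSubgroup.mem_sup.mp haB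
    have ha₁ : a₁ ∈ B₁ ⊓ B₁p := by
      refine AddSubgroup.mem_inf.mpr ⟨h₁, ?_⟩
      have : a₁ = a - a₂ := by rw [← hEq]; abel
      rw [this]
      exact sub_mem haC1 (hBB h₂)
    rw [hinf₁, AddSubgroup.mem_bot] at ha₁
    have ha₂ : a ∈ B₂ ⊓ B₂p := by
      refine AddSubgroup.mem_inf.mpr ⟨?_, haC2⟩
      rw [← hEq, ha₁, zero_add]
      exact h₂
    rw [hinf₂] at ha₂
    exact ha₂
  have hCsup : (B₁p ⊓ B₂p) ⊔ (B₁ ⊔ B₂) = ⊤ := by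
    rw [eq_top_iff]
    intro a _
    obtain ⟨a₁, h₁, a₂, h₂, c, hc, hEq⟩ := trip a
    rw [hEq]
    exact add_mem (add_mem
      (AddSubgroup.mem_sup_right (AddSubgroup.mem_sup_left h₁))
      (AddSubgroup.mem_sup_right (AddSubgroup.mem_sup_right h₂)))
      (AddSubgroup.mem_sup_left hc)
  -- centralizer characterization
  have hcent : ∀ y : AddAut A, y ∈ Subgroup.centralizer {ε₁, ε₂} ↔
      ((∀ a ∈ B₁, y a ∈ B₁) ∧ (∀ a ∈ B₁p, y a ∈ B₁p) ∧
       (∀ a ∈ B₂, y a ∈ B₂) ∧ (∀ a ∈ B₂p, y a ∈ B₂p)) := by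
    intro y
    rw [Subgroup.mem_centralizer_iff]
    constructor
    · intro h
      have e1 := h ε₁ (Set.mem_insert _ _)
      have e2 := h ε₂ (Set.mem_insert_of_mem _ rfl)
      obtain ⟨q1, q2⟩ := (hcom₁ y).mp e1.symm
      obtain ⟨q3, q4⟩ := (hcom₂ y).mp e2.symm
      exact ⟨q1, q2, q3, q4⟩
    · rintro ⟨q1, q2, q3, q4⟩ g hg
      simp only [Set.mem_insert_iff, Set.mem_singleton_iff] at hg
      rcases hg with rfl | rfl
      · exact ((hcom₁ y).mpr ⟨q1, q2⟩).symm
      · exact ((hcom₂ y).mpr ⟨q3, q4⟩).symm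
  have hcentP : ∀ y : AddAut A, y ∈ Subgroup.centralizer {ε₁, ε₂} →
      Preserves y B₁ ∧ Preserves y B₂ ∧ Preserves y (B₁p ⊓ B₂p) := by
    intro y hy
    obtain ⟨q1, q2, q3, q4⟩ := (hcent y).mp hy
    obtain ⟨r1, r2, r3, r4⟩ := (hcent y⁻¹).mp (Subgroup.inv_mem _ hy)
    exact ⟨⟨q1, r1⟩, ⟨q3, r3⟩,
      ⟨fun a ha => ⟨q2 a ha.1, q4 a ha.2⟩, fun a ha => ⟨r2 a ha.1, r4 a ha.2⟩⟩⟩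
  constructor
  · rintro ⟨hxc, hxz⟩
    obtain ⟨P1, P2, PC⟩ := hcentP x hxc
    refine ⟨P1, P2, PC, ?_⟩
    intro g a
    obtain ⟨ghat, hg1, hg2⟩ := ext_aut (B₁p ⊓ B₂p) (B₁ ⊔ B₂) hCinf hCsup g
    have hmem : ghat ∈ Subgroup.centralizer {ε₁, ε₂} := by
      refine (hcent ghat).mpr ⟨?_, ?_, ?_, ?_⟩
      · intro a' ha'
        rw [hg2 a' (AddSubgroup.mem_sup_left ha')]
        exact ha'
      · intro a' ha'
        rw [← hB1pe] at ha' ⊢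
        obtain ⟨u, hu, v, hv, hEq⟩ := AddSubgroup.mem_sup.mp ha'
        rw [← hEq, map_add, hg2 u (AddSubgroup.mem_sup_right hu), hg1 ⟨v, hv⟩]
        exact add_mem (AddSubgroup.mem_sup_left hu)
          (AddSubgroup.mem_sup_right (g ⟨v, hv⟩).2)
      · intro a' ha'
        rw [hg2 a' (AddSubgroup.mem_sup_right ha')]
        exact ha'
      · intro a' ha'
        rw [← hB2pe] at ha' ⊢
        obtain ⟨u, hu, v, hv, hEq⟩ := AddSubgroup.mem_sup.mp ha'
        rw [← hEq, map_add, hg2 u (AddSubgroup.mem_sup_left hu), hg1 ⟨v, hv⟩]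
        exact add_mem (AddSubgroup.mem_sup_left hu)
          (AddSubgroup.mem_sup_right (g ⟨v, hv⟩).2)
    have happ : ∀ v : A, x (ghat v) = ghat (x v) := fun v =>
      DFunLike.congr_fun (hxz ghat hmem) v
    calc x ↑(g a) = x (ghat ↑a) := by rw [hg1 a]
    _ = ghat (x ↑a) := happ ↑a
    _ = ↑(g ⟨x ↑a, PC.1 ↑a a.2⟩) := hg1 ⟨x ↑a, PC.1 ↑a a.2⟩
  · rintro ⟨P1, P2, PC, hcen⟩
    have hxmem : x ∈ Subgroup.centralizer {ε₁, ε₂} := by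
      refine (hcent x).mpr ⟨P1.1, ?_, P2.1, ?_⟩
      · intro a' ha'
        rw [← hB1pe] at ha' ⊢
        obtain ⟨u, hu, v, hv, hEq⟩ := AddSubgroup.mem_sup.mp ha'
        rw [← hEq, map_add]
        exact add_mem (AddSubgroup.mem_sup_left (P2.1 u hu))
          (AddSubgroup.mem_sup_right (PC.1 v hv))
      · intro a' ha'
        rw [← hB2pe] at ha' ⊢
        obtain ⟨u, hu, v, hv, hEq⟩ := AddSubgroup.mem_sup.mp ha'
        rw [← hEq, map_add]
        exact add_mem (AddSubgroup.mem_sup_left (P1.1 u hu))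
          (AddSubgroup.mem_sup_right (PC.1 v hv))
    refine ⟨hxmem, ?_⟩
    intro y hy
    obtain ⟨Q1, Q2, QC⟩ := hcentP y hy
    have e1 : ∀ a ∈ B₁, x (y a) = y (x a) :=
      comm_on_indecomp hp B₁ (fun b hb => hc₁ hb) ⟨hind₁.1, hind₁.2⟩ x y P1.1 Q1.1
    have e2 : ∀ a ∈ B₂, x (y a) = y (x a) :=
      comm_on_indecomp hp B₂ (fun b hb => hc₂ hb) ⟨hind₂.1, hind₂.2⟩ x y P2.1 Q2.1
    have e3 : ∀ a ∈ B₁p ⊓ B₂p, x (y a) = y (x a) := by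
      intro a ha
      have := hcen (restrictAut y QC) ⟨a, ha⟩
      exact this
    ext a
    show x (y a) = y (x a)
    obtain ⟨a₁, h₁, a₂, h₂, c, hc, rfl⟩ := trip a
    simp only [map_add]
    rw [e1 a₁ h₁, e2 a₂ h₂, e3 c hc]
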